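/- Let X_0, ..., X_{N-1} be i.i.d. with atomless distribution μ on ℝ, let J be the index of the maximum and x the value of the maximum. Conditioned on {J = j, X_J = x}, the remaining N-1 samples (X_n)_{n ≠ j} are i.i.d. with the conditional law of V given V ≤ x, where V ∼ μ. -/

import Mathlib

open MeasureTheory ProbabilityTheory

private lemma pi_fintype_congr {ι : Type*} {α : ι → Type*} (F1 F2 : Fintype ι)
    [∀ i, MeasurableSpace (α i)] (μ : ∀ i, Measure (α i)) :
    @Measure.pi ι α F1 _ μ = @Measure.pi ι α F2 _ μ := by
  cases Subsingleton.elim F1 F2; rfl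

/-- for i.i.d. samples with atomless law `ν`, conditioned on the argmax being `j`
and on the maximal value `X_J = x`, the remaining `N-1` samples are i.i.d. with the law of
`V` given `V ≤ x`, `V ∼ ν`.  Since `{X_J = x}` has probability zero, this is expressed by
disintegration: for every measurable `B` and measurable targets `A i`,
`P(J = j, X_j ∈ B, ∀ i ≠ j : X i ∈ A i) = ∫_B ∏_{i ≠ j} ν(A i ∩ (-∞, x]) dν(x)`,
i.e. given `{J = j, X_J = x}` each remaining sample independently has law
`ν(· ∩ (-∞, x]) / ν((-∞, x])` (whenever `ν((-∞, x]) > 0`). -/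
theorem remaining_samples_truncated_iid
    {Ω : Type*} [MeasurableSpace Ω] (μ : Measure Ω) [IsProbabilityMeasure μ]
    (N : ℕ) (hN : 2 ≤ N)
    (X : Fin N → Ω → ℝ) (hmeas : ∀ i, Measurable (X i))
    (hindep : iIndepFun X μ)
    (ν : Measure ℝ) [IsProbabilityMeasure ν] [NullSingletonClass ν]
    (hid : ∀ i, Measure.map (X i) μ = ν)
    (J : Ω → Fin N) (hJ : ∀ ω i, X i ω ≤ X (J ω) ω)
    (j : Fin N) (B : Set ℝ) (hB : MeasurableSet B)
    (A : Fin N → Set ℝ) (hA : ∀ i, MeasurableSet (A i)) :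
    (μ {ω | J ω = j ∧ X j ω ∈ B ∧ ∀ i, i ≠ j → X i ω ∈ A i}).toReal
      = ∫ x in B, ∏ i ∈ Finset.univ.erase j, (ν (A i ∩ Set.Iic x)).toReal ∂ν := by
  classical
  -- the map to the product space
  set φ : Ω → (Fin N → ℝ) := fun ω i => X i ω with hφ
  have hφm : Measurable φ := measurable_pi_lambda _ hmeas
  have hmap : Measure.map φ μ = Measure.pi fun _ => ν := by
    refine (Measure.pi_eq (ι := Fin N) (μ := fun _ => ν) fun s hs => ?_).symm
    rw [Measure.map_apply hφm (MeasurableSet.univ_pi hs)]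
    have hpre : φ ⁻¹' Set.pi Set.univ s = ⋂ i, X i ⁻¹' s i := by
      ext ω; simp [hφ, Set.mem_pi]
    rw [hpre, hindep.meas_iInter (fun i => ⟨s i, hs i, rfl⟩)]
    exact Finset.prod_congr rfl fun i _ => by
      rw [← hid i, Measure.map_apply (hmeas i) (hs i)]
  -- ties are null
  have htie : ∀ i k : Fin N, i ≠ k → μ {ω | X i ω = X k ω} = 0 := by
    intro i k hik
    have hind : IndepFun (X i) (X k) μ := hindep.indepFun hik
    have hmap2 : Measure.map (fun ω => (X i ω, X k ω)) μ = ν.prod ν := by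
      rw [(indepFun_iff_map_prod_eq_prod_map_map (hmeas i).aemeasurable
        (hmeas k).aemeasurable).mp hind, hid i, hid k]
    have hdiag : MeasurableSet {p : ℝ × ℝ | p.1 = p.2} :=
      (isClosed_eq continuous_fst continuous_snd).measurableSet
    have : {ω | X i ω = X k ω} = (fun ω => (X i ω, X k ω)) ⁻¹' {p : ℝ × ℝ | p.1 = p.2} := rfl
    rw [this, ← Measure.map_apply ((hmeas i).prodMk (hmeas k)) hdiag, hmap2,
      Measure.prod_apply hdiag]
    simp only [Set.preimage, Set.mem_setOf_eq]
    have : (fun x => ν {y : ℝ | x = y}) = fun x => (0 : ENNReal) := by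
      funext x
      have : {y : ℝ | x = y} = {x} := by ext y; simp [eq_comm]
      rw [this, measure_singleton]
    simp [this]
  set T : Set Ω := ⋃ (i : Fin N), ⋃ (k : Fin N), ⋃ (_ : i ≠ k), {ω | X i ω = X k ω} with hT
  have hTnull : μ T = 0 := by
    refine measure_iUnion_null fun i => measure_iUnion_null fun k => measure_iUnion_null fun h => htie i k h
  -- the good measurable set
  set S : Set Ω := {ω | X j ω ∈ B ∧ ∀ i, i ≠ j → X i ω ∈ A i ∩ Set.Iio (X j ω)} with hS
  set E : Set Ω := {ω | J ω = j ∧ X j ω ∈ B ∧ ∀ i, i ≠ j → X i ω ∈ A i} with hE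
  have hES : ∀ ω, ω ∉ T → (ω ∈ E ↔ ω ∈ S) := by
    intro ω hωT
    have hnotie : ∀ i k : Fin N, i ≠ k → X i ω ≠ X k ω := by
      intro i k hik heq
      exact hωT (Set.mem_iUnion.2 ⟨i, Set.mem_iUnion.2 ⟨k, Set.mem_iUnion.2 ⟨hik, heq⟩⟩⟩)
    constructor
    · rintro ⟨hJj, hBj, hAi⟩
      refine ⟨hBj, fun i hij => ⟨hAi i hij, ?_⟩⟩
      have hle : X i ω ≤ X j ω := by have := hJ ω i; rwa [hJj] at this
      exact lt_of_le_of_ne hle (hnotie i j hij)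
    · rintro ⟨hBj, hAi⟩
      have hJj : J ω = j := by
        by_contra hne
        have h1 : X (J ω) ω < X j ω := (hAi (J ω) hne).2
        exact absurd (hJ ω j) (not_le.2 h1)
      exact ⟨hJj, hBj, fun i hij => (hAi i hij).1⟩
  have hEeqS : μ E = μ S := by
    apply measure_congr
    rw [Filter.eventuallyEq_set]
    filter_upwards [measure_eq_zero_iff_ae_notMem.mp hTnull] with ω hω
    exact hES ω hω
  -- push to the product space
  set S' : Set (Fin N → ℝ) :=
    {y | y j ∈ B ∧ ∀ i, i ≠ j → y i ∈ A i ∩ Set.Iio (y j)} with hS'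
  have hS'meas : MeasurableSet S' := by
    apply MeasurableSet.inter
    · exact (measurable_pi_apply j) hB
    · have hrw : {y : Fin N → ℝ | ∀ i, i ≠ j → y i ∈ A i ∩ Set.Iio (y j)}
          = ⋂ i, {y : Fin N → ℝ | i ≠ j → y i ∈ A i ∩ Set.Iio (y j)} := by
        ext y; simp
      show MeasurableSet {y : Fin N → ℝ | ∀ i, i ≠ j → y i ∈ A i ∩ Set.Iio (y j)}
      rw [hrw]
      refine MeasurableSet.iInter fun i => ?_
      by_cases hij : i = j
      · simp [hij]
      · have : {y : Fin N → ℝ | i ≠ j → y i ∈ A i ∩ Set.Iio (y j)}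
            = {y | y i ∈ A i} ∩ {y | y i < y j} := by
          ext y; simp [hij]
        rw [this]
        exact ((measurable_pi_apply i) (hA i)).inter
          (measurableSet_lt (measurable_pi_apply i) (measurable_pi_apply j))
  have hSpre : S = φ ⁻¹' S' := rfl
  have hmuS : μ S = (Measure.pi fun _ : Fin N => ν) S' := by
    rw [hSpre, ← Measure.map_apply hφm hS'meas, hmap]
  -- compute the pi measure via Fubini
  have hIio : ∀ (s : Set ℝ) (x : ℝ), ν (s ∩ Set.Iic x) = ν (s ∩ Set.Iio x) := by
    intro s x
    have h1 : s ∩ Set.Iic x = (s ∩ Set.Iio x) ∪ (s ∩ {x}) := by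
      rw [← Set.inter_union_distrib_left, Set.Iio_union_right]
    refine le_antisymm ?_
      (measure_mono (Set.inter_subset_inter_right _ Set.Iio_subset_Iic_self))
    calc ν (s ∩ Set.Iic x) ≤ ν (s ∩ Set.Iio x) + ν (s ∩ {x}) := by
          rw [h1]; exact measure_union_le _ _
      _ = ν (s ∩ Set.Iio x) := by
          rw [measure_mono_null Set.inter_subset_right (measure_singleton x), add_zero]
  have key : (Measure.pi fun _ : Fin N => ν) S'
      = ∫⁻ x in B, ∏ i ∈ Finset.univ.erase j, ν (A i ∩ Set.Iic x) ∂ν := by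
    set p : Fin N → Prop := fun i => i = j with hp
    set e := MeasurableEquiv.piEquivPiSubtypeProd (fun _ : Fin N => ℝ) p with he
    have MP := measurePreserving_piEquivPiSubtypeProd (fun _ : Fin N => ν) p
    set g : ℝ → ENNReal :=
      B.indicator fun x => ∏ i ∈ Finset.univ.erase j, ν (A i ∩ Set.Iic x) with hg
    have hf1 : Measurable fun q : ({i // p i} → ℝ) × ({i // ¬ p i} → ℝ) =>
        q.1 ⟨j, rfl⟩ := (measurable_pi_apply _).comp measurable_fst
    have hf2 : ∀ i : {i // ¬ p i},
        Measurable fun q : ({i // p i} → ℝ) × ({i // ¬ p i} → ℝ) => q.2 i :=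
      fun i => (measurable_pi_apply _).comp measurable_snd
    set t : Set (({i // p i} → ℝ) × ({i // ¬ p i} → ℝ)) :=
      {q | q.1 ⟨j, rfl⟩ ∈ B} ∩
        ⋂ i : {i // ¬ p i}, {q | q.2 i ∈ A i.1 ∧ q.2 i < q.1 ⟨j, rfl⟩} with ht
    have htm : MeasurableSet t := by
      refine MeasurableSet.inter (hf1 hB) ?_
      refine MeasurableSet.iInter fun i => ?_
      exact ((hf2 i) (hA i.1)).inter (measurableSet_lt (hf2 i) hf1)
    have hpre : e ⁻¹' t = S' := by
      ext y
      simp only [ht, hS', he, Set.mem_preimage, Set.mem_inter_iff, Set.mem_iInter,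
        Set.mem_setOf_eq, MeasurableEquiv.piEquivPiSubtypeProd,
        Equiv.piEquivPiSubtypeProd, MeasurableEquiv.coe_mk, Equiv.coe_fn_mk,
        Subtype.forall, Set.mem_Iio, Set.mem_inter_iff]
      exact Iff.rfl
    have h1 := MP.measure_preimage htm.nullMeasurableSet
    rw [hpre] at h1
    have hgmeas : Measurable g := by
      refine Measurable.indicator ?_ hB
      exact Finset.measurable_prod _ fun i _ => Monotone.measurable fun x y hxy =>
        measure_mono (Set.inter_subset_inter_right _ (Set.Iic_subset_Iic.2 hxy))
    have hcong : ∀ a : {i // p i} → ℝ,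
        (Measure.pi fun _ : {i // ¬ p i} => ν) (Prod.mk a ⁻¹' t) = g (a ⟨j, rfl⟩) := by
      intro a
      by_cases hBa : a ⟨j, rfl⟩ ∈ B
      · have hset : Prod.mk a ⁻¹' t
            = Set.pi Set.univ fun i : {i // ¬ p i} => A i.1 ∩ Set.Iio (a ⟨j, rfl⟩) := by
          ext b
          simp [ht, hBa, Set.mem_pi]
        rw [hset, Measure.pi_pi, hg, Set.indicator_of_mem hBa]
        refine Eq.trans (Finset.prod_congr rfl fun i _ => (hIio (A i.1) _).symm) ?_
        exact (Finset.prod_subtype (Finset.univ.erase j)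
          (fun i => by simp [hp, Finset.mem_erase])
          fun i => ν (A i ∩ Set.Iic (a ⟨j, rfl⟩))).symm
      · have hset : Prod.mk a ⁻¹' t = ∅ := by
          ext b; simp [ht, hBa]
        rw [hset, hg, Set.indicator_of_notMem hBa]
        simp
    haveI : Unique {i // p i} := Unique.subtypeEq j
    rw [h1, Measure.prod_apply htm, ← lintegral_indicator hB, ← hg]
    refine Eq.trans (lintegral_congr hcong) ?_
    refine Eq.trans ?_ ((measurePreserving_funUnique ν {i // p i}).lintegral_comp hgmeas)
    conv_rhs => rw [pi_fintype_congr _ (Subtype.fintype p) (fun _ => ν)]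
    refine lintegral_congr fun a => ?_
    show g (a ⟨j, rfl⟩) = g ((MeasurableEquiv.funUnique {i // p i} ℝ) a)
    exact congrArg g (congrArg a (Subsingleton.elim (⟨j, rfl⟩ : {i // p i}) _))
  -- convert to a Bochner integral
  have hmono : ∀ i : Fin N, Measurable fun x => ν (A i ∩ Set.Iic x) := by
    intro i
    exact Monotone.measurable fun x y hxy =>
      measure_mono (Set.inter_subset_inter_right _ (Set.Iic_subset_Iic.2 hxy))
  have hprodmeas : Measurable fun x => ∏ i ∈ Finset.univ.erase j, ν (A i ∩ Set.Iic x) :=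
    Finset.measurable_prod _ fun i _ => hmono i
  have hlt : ∀ x, (∏ i ∈ Finset.univ.erase j, ν (A i ∩ Set.Iic x)) < ⊤ := by
    intro x
    refine ENNReal.prod_lt_top fun i _ => ?_
    exact measure_lt_top ν _
  rw [hEeqS, hmuS, key]
  rw [← integral_toReal (hprodmeas.aemeasurable.restrict)
    (Filter.Eventually.of_forall fun x => hlt x)]
  refine integral_congr_ae (Filter.Eventually.of_forall fun x => ?_)
  simp [ENNReal.toReal_prod]
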